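/- arXiv:1312.0772 — 2 statements merged into one kernel-verified Lean document; each statement's English description precedes it below -/
import Mathlib

section
/- For any graph G, λ(G) ≤ λ_g(G) ≤ λ(G) + 1. -/
variable {V : Type*}

/-- `S` is a dominating set of `G`: every vertex outside `S` has a neighbor in `S`. -/
def IsDominatingSet (G : SimpleGraph V) (S : Set V) : Prop :=
  ∀ v ∉ S, (G.neighborSet v ∩ S).Nonempty

/-- `S` is a locating-dominating set of `G`. -/
def IsLDSet (G : SimpleGraph V) (S : Set V) : Prop :=
  IsDominatingSet G S ∧
    ∀ u ∉ S, ∀ v ∉ S, G.neighborSet u ∩ S = G.neighborSet v ∩ S → u = v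

/-- The location-domination number of `G`. -/
noncomputable def ldNum [Fintype V] (G : SimpleGraph V) : ℕ :=
  sInf {n | ∃ S : Set V, IsLDSet G S ∧ S.ncard = n}

/-- `S` is a global LD-set of `G`: an LD-set of both `G` and its complement. -/
def IsGlobalLDSet (G : SimpleGraph V) (S : Set V) : Prop :=
  IsLDSet G S ∧ IsLDSet Gᶜ S

/-- The global location-domination number of `G`. -/
noncomputable def gldNum [Fintype V] (G : SimpleGraph V) : ℕ :=
  sInf {n | ∃ S : Set V, IsGlobalLDSet G S ∧ S.ncard = n}

lemma univ_isLDSet (G : SimpleGraph V) : IsLDSet G Set.univ := by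
  refine ⟨fun v hv => absurd (Set.mem_univ v) hv,
    fun u hu => absurd (Set.mem_univ u) hu⟩

/-- Equal complement-neighborhoods within S give equal neighborhoods within S. -/
lemma compl_nbhd_eq {G : SimpleGraph V} {S : Set V} {u v : V} (hu : u ∉ S) (hv : v ∉ S)
    (h : Gᶜ.neighborSet u ∩ S = Gᶜ.neighborSet v ∩ S) :
    G.neighborSet u ∩ S = G.neighborSet v ∩ S := by
  ext x
  simp only [Set.mem_inter_iff, SimpleGraph.mem_neighborSet]
  constructor
  · rintro ⟨hadj, hxS⟩
    refine ⟨?_, hxS⟩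
    by_contra hnadj
    have hx : x ∈ Gᶜ.neighborSet v ∩ S := by
      refine ⟨⟨?_, hnadj⟩, hxS⟩
      rintro rfl; exact hv hxS
    rw [← h] at hx
    exact hx.1.2 hadj
  · rintro ⟨hadj, hxS⟩
    refine ⟨?_, hxS⟩
    by_contra hnadj
    have hx : x ∈ Gᶜ.neighborSet u ∩ S := by
      refine ⟨⟨?_, hnadj⟩, hxS⟩
      rintro rfl; exact hu hxS
    rw [h] at hx
    exact hx.1.2 hadj

theorem stmt11 [Fintype V] (G : SimpleGraph V) :
    ldNum G ≤ gldNum G ∧ gldNum G ≤ ldNum G + 1 := by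
  have hgne : {n | ∃ S : Set V, IsGlobalLDSet G S ∧ S.ncard = n}.Nonempty :=
    ⟨_, Set.univ, ⟨univ_isLDSet G, univ_isLDSet Gᶜ⟩, rfl⟩
  have hlne : {n | ∃ S : Set V, IsLDSet G S ∧ S.ncard = n}.Nonempty :=
    ⟨_, Set.univ, univ_isLDSet G, rfl⟩
  constructor
  · -- ldNum ≤ gldNum
    obtain ⟨S, hS, hcard⟩ := Nat.sInf_mem hgne
    exact Nat.sInf_le ⟨S, hS.1, hcard⟩
  · -- gldNum ≤ ldNum + 1
    obtain ⟨S, hS, hcard⟩ := Nat.sInf_mem hlne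
    by_cases hdom : IsDominatingSet Gᶜ S
    · -- S is already a global LD-set
      have hglobal : IsGlobalLDSet G S :=
        ⟨hS, hdom, fun u hu v hv h => hS.2 u hu v hv (compl_nbhd_eq hu hv h)⟩
      calc gldNum G ≤ S.ncard := Nat.sInf_le ⟨S, hglobal, rfl⟩
        _ ≤ ldNum G + 1 := le_trans (le_of_eq hcard) (Nat.le_succ _)
    · -- there is a vertex w ∉ S adjacent (in G) to all of S; add it
      simp only [IsDominatingSet, not_forall] at hdom
      obtain ⟨w, hwS, hwne⟩ := hdom
      -- vertices outside S with no Ḡ-neighbor in S have full G-neighborhood in S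
      have full : ∀ x ∉ S, ¬(Gᶜ.neighborSet x ∩ S).Nonempty →
          G.neighborSet x ∩ S = S := by
        intro x hxS hx
        rw [Set.not_nonempty_iff_eq_empty] at hx
        ext s
        simp only [Set.mem_inter_iff, SimpleGraph.mem_neighborSet]
        refine ⟨fun h => h.2, fun hsS => ⟨?_, hsS⟩⟩
        by_contra hnadj
        have : s ∈ Gᶜ.neighborSet x ∩ S := by
          refine ⟨⟨?_, hnadj⟩, hsS⟩
          rintro rfl; exact hxS hsS
        rw [hx] at this
        exact this
      set T : Set V := insert w S with hT
      have hST : S ⊆ T := Set.subset_insert w S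
      have hinterS : ∀ x : V, ∀ H : SimpleGraph V,
          H.neighborSet x ∩ S ⊆ H.neighborSet x ∩ T :=
        fun x H => Set.inter_subset_inter_right _ hST
      have hTG : IsLDSet G T := by
        constructor
        · intro v hv
          have hvS : v ∉ S := fun h => hv (hST h)
          obtain ⟨x, hx⟩ := hS.1 v hvS
          exact ⟨x, hinterS v G hx⟩
        · intro u hu v hv h
          have huS : u ∉ S := fun h' => hu (hST h')
          have hvS : v ∉ S := fun h' => hv (hST h')
          apply hS.2 u huS v hvS
          have := congrArg (· ∩ S) h
          simpa [Set.inter_assoc, Set.inter_eq_self_of_subset_right hST] using this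
      have hTGc : IsLDSet Gᶜ T := by
        constructor
        · intro v hv
          have hvS : v ∉ S := fun h => hv (hST h)
          by_cases hvne : (Gᶜ.neighborSet v ∩ S).Nonempty
          · obtain ⟨x, hx⟩ := hvne
            exact ⟨x, hinterS v Gᶜ hx⟩
          · exfalso
            have hvw : v = w := by
              apply hS.2 v hvS w hwS
              rw [full v hvS hvne, full w hwS hwne]
            exact hv (hvw ▸ Set.mem_insert w S)
        · intro u hu v hv h
          have huS : u ∉ S := fun h' => hu (hST h')
          have hvS : v ∉ S := fun h' => hv (hST h')
          apply hS.2 u huS v hvS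
          apply compl_nbhd_eq huS hvS
          have := congrArg (· ∩ S) h
          simpa [Set.inter_assoc, Set.inter_eq_self_of_subset_right hST] using this
      have hcardT : T.ncard = S.ncard + 1 :=
        Set.ncard_insert_of_notMem hwS (Set.toFinite S)
      calc gldNum G ≤ T.ncard := Nat.sInf_le ⟨T, ⟨hTG, hTGc⟩, rfl⟩
        _ = ldNum G + 1 := by rw [hcardT, hcard]; rfl
end

section
/- If G is a graph with diameter at least 5, then λ_g(G) = λ(G). -/
variable {V : Type*}

lemma compl_nbhd_inter (G : SimpleGraph V) {S : Set V} {u : V} (hu : u ∉ S) :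
    Gᶜ.neighborSet u ∩ S = S \ (G.neighborSet u ∩ S) := by
  ext s
  simp only [Set.mem_inter_iff, SimpleGraph.mem_neighborSet, SimpleGraph.compl_adj,
    Set.mem_diff, not_and]
  constructor
  · rintro ⟨⟨hne, hna⟩, hs⟩
    exact ⟨hs, fun ha _ => hna ha⟩
  · rintro ⟨hs, hna⟩
    exact ⟨⟨fun heq => hu (heq ▸ hs), fun ha => hna ha hs⟩, hs⟩

lemma ld_compl (G : SimpleGraph V) (hconn : G.Connected) (x y : V) (h : 5 ≤ G.dist x y)
    {S : Set V} (hS : IsLDSet G S) : IsLDSet Gᶜ S := by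
  obtain ⟨hdom, hloc⟩ := hS
  constructor
  · -- domination in the complement
    intro v hv
    by_contra hempty
    rw [Set.not_nonempty_iff_eq_empty, compl_nbhd_inter G hv,
      Set.diff_eq_empty] at hempty
    -- every s ∈ S is adjacent to v in G
    have hadj : ∀ s ∈ S, G.Adj v s := fun s hs => ((hempty hs).1 : G.Adj v s)
    -- every vertex is within distance 2 of v
    have hdist : ∀ u : V, G.dist u v ≤ 2 := by
      intro u
      by_cases huv : u = v
      · simp [huv, SimpleGraph.dist_self]
      by_cases hu : u ∈ S
      · have : G.Adj u v := (hadj u hu).symm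
        calc G.dist u v = 1 := by rwa [SimpleGraph.dist_eq_one_iff_adj]
        _ ≤ 2 := by norm_num
      · obtain ⟨s, hsadj, hsS⟩ := hdom u hu
        have h1 : G.dist u s = 1 := by
          rwa [SimpleGraph.dist_eq_one_iff_adj]
        have h2 : G.dist s v = 1 := by
          rw [SimpleGraph.dist_eq_one_iff_adj]
          exact (hadj s hsS).symm
        calc G.dist u v ≤ G.dist u s + G.dist s v := hconn.dist_triangle
          _ = 2 := by rw [h1, h2]
    have hxy : G.dist x y ≤ 4 := by
      calc G.dist x y ≤ G.dist x v + G.dist v y := hconn.dist_triangle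
        _ ≤ 2 + 2 := Nat.add_le_add (hdist x)
          (by rw [SimpleGraph.dist_comm]; exact hdist y)
    omega
  · -- location in the complement
    intro u hu v hv heq
    rw [compl_nbhd_inter G hu, compl_nbhd_inter G hv] at heq
    apply hloc u hu v hv
    have h1 : S \ (S \ (G.neighborSet u ∩ S)) = S \ (S \ (G.neighborSet v ∩ S)) := by
      rw [heq]
    rwa [Set.diff_diff_cancel_left (Set.inter_subset_right),
      Set.diff_diff_cancel_left (Set.inter_subset_right)] at h1

theorem stmt14 [Fintype V] (G : SimpleGraph V) (hconn : G.Connected)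
    (x y : V) (h : 5 ≤ G.dist x y) :
    gldNum G = ldNum G := by
  unfold gldNum ldNum
  congr 1
  ext n
  constructor
  · rintro ⟨S, ⟨hG, _⟩, hn⟩
    exact ⟨S, hG, hn⟩
  · rintro ⟨S, hG, hn⟩
    exact ⟨S, ⟨hG, ld_compl G hconn x y h hG⟩, hn⟩
end
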